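/- Let M_n ≤ M_m be free monoids as above and E the set of words whose maximal initial segment in M_n is empty (i.e., the empty word or words starting with a generator not among the first n). Then for any finitely supported p on M_n and any finitely supported q on M_m, writing q = Σⱼ rⱼ * δ_{yⱼ} with rⱼ supported on M_n and yⱼ ∈ E distinct, one has ‖p * q‖₂² = Σⱼ ‖p * rⱼ‖₂². Consequently the left-convolution operator norm of p on ℓ²(M_m) equals its left-convolution operator norm on ℓ²(M_n). -/

import Mathlib

/-- The ℓ² norm of a finitely supported function on the free monoid. -/
noncomputable def l2norm {m : ℕ} (p : MonoidAlgebra ℂ (FreeMonoid (Fin m))) : ℝ :=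
  Real.sqrt (∑ x ∈ p.coeff.support, ‖p.coeff x‖ ^ 2)

namespace ConvAux

instance {m : ℕ} : DecidableEq (FreeMonoid (Fin m)) := fun a b =>
  decidable_of_iff (a.toList = b.toList) FreeMonoid.toList.injective.eq_iff

variable {m : ℕ}

noncomputable def S (f : MonoidAlgebra ℂ (FreeMonoid (Fin m))) : ℝ :=
  ∑ x ∈ f.coeff.support, ‖f.coeff x‖ ^ 2

lemma S_nonneg (f : MonoidAlgebra ℂ (FreeMonoid (Fin m))) : 0 ≤ S f :=
  Finset.sum_nonneg fun _ _ => sq_nonneg _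

lemma l2norm_def (f : MonoidAlgebra ℂ (FreeMonoid (Fin m))) : l2norm f = Real.sqrt (S f) := rfl

lemma l2norm_nonneg (f : MonoidAlgebra ℂ (FreeMonoid (Fin m))) : 0 ≤ l2norm f :=
  Real.sqrt_nonneg _

lemma l2norm_sq (f : MonoidAlgebra ℂ (FreeMonoid (Fin m))) : (l2norm f) ^ 2 = S f :=
  Real.sq_sqrt (S_nonneg f)

lemma S_subset {f : MonoidAlgebra ℂ (FreeMonoid (Fin m))} {T : Finset (FreeMonoid (Fin m))}
    (h : f.coeff.support ⊆ T) : S f = ∑ x ∈ T, ‖f.coeff x‖ ^ 2 :=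
  Finset.sum_subset h (fun x _ hx => by
    simp [Finsupp.notMem_support_iff.mp hx])

lemma l2norm_eq_norm {f : MonoidAlgebra ℂ (FreeMonoid (Fin m))} {T : Finset (FreeMonoid (Fin m))}
    (h : f.coeff.support ⊆ T) :
    l2norm f = ‖(WithLp.equiv 2 (T → ℂ)).symm (fun x : T => f.coeff x)‖ := by
  rw [EuclideanSpace.norm_eq, l2norm_def, S_subset h, ← Finset.sum_coe_sort T]; rfl

lemma l2norm_add_le (f g : MonoidAlgebra ℂ (FreeMonoid (Fin m))) :
    l2norm (f + g) ≤ l2norm f + l2norm g := by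
  classical
  set T := f.coeff.support ∪ g.coeff.support with hT
  have h1 : (f + g).coeff.support ⊆ T := by rw [MonoidAlgebra.coeff_add]; exact Finsupp.support_add
  have h2 : f.coeff.support ⊆ T := Finset.subset_union_left
  have h3 : g.coeff.support ⊆ T := Finset.subset_union_right
  rw [l2norm_eq_norm h1, l2norm_eq_norm h2, l2norm_eq_norm h3]
  have : (fun x : T => (f + g).coeff x) = (fun x : T => f.coeff x) + (fun x : T => g.coeff x) := by
    funext x; rw [MonoidAlgebra.coeff_add, Finsupp.add_apply]; rfl
  rw [this, WithLp.equiv_symm_apply, WithLp.toLp_add]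
  exact norm_add_le _ _

lemma l2norm_zero : l2norm (0 : MonoidAlgebra ℂ (FreeMonoid (Fin m))) = 0 := by
  simp [l2norm]

lemma l2norm_smul (c : ℂ) (f : MonoidAlgebra ℂ (FreeMonoid (Fin m))) :
    l2norm (c • f) = ‖c‖ * l2norm f := by
  classical
  have h1 : (c • f).coeff.support ⊆ f.coeff.support := by
    rw [MonoidAlgebra.coeff_smul]; exact Finsupp.support_smul
  rw [l2norm_eq_norm h1, l2norm_eq_norm (Finset.Subset.refl f.coeff.support)]
  have : (fun x : f.coeff.support => (c • f).coeff x) = c • (fun x : f.coeff.support => f.coeff x) := by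
    funext x; rw [MonoidAlgebra.coeff_smul, Finsupp.smul_apply]; rfl
  rw [this, WithLp.equiv_symm_apply, WithLp.toLp_smul, norm_smul]

lemma l2norm_pos {f : MonoidAlgebra ℂ (FreeMonoid (Fin m))} (hf : f ≠ 0) : 0 < l2norm f := by
  rw [l2norm_def]
  apply Real.sqrt_pos.mpr
  obtain ⟨x, hx⟩ := Finsupp.support_nonempty_iff.mpr (MonoidAlgebra.coeff_eq_zero.not.mpr hf)
  have hfx : f.coeff x ≠ 0 := Finsupp.mem_support_iff.mp hx
  exact Finset.sum_pos' (fun _ _ => sq_nonneg _)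
    ⟨x, hx, by have := norm_pos_iff.mpr hfx; positivity⟩

lemma l2norm_sum_le {ι : Type*} (s : Finset ι) (f : ι → MonoidAlgebra ℂ (FreeMonoid (Fin m))) :
    l2norm (∑ i ∈ s, f i) ≤ ∑ i ∈ s, l2norm (f i) := by
  classical
  induction s using Finset.cons_induction with
  | empty => simp [l2norm_zero]
  | cons a s ha ih =>
    rw [Finset.sum_cons, Finset.sum_cons]
    exact le_trans (l2norm_add_le _ _) (by linarith)

variable {m : ℕ}

lemma S_mapDomain {g : FreeMonoid (Fin m) → FreeMonoid (Fin m)} (hg : Function.Injective g)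
    (f : MonoidAlgebra ℂ (FreeMonoid (Fin m))) :
    S (MonoidAlgebra.ofCoeff (Finsupp.mapDomain g f.coeff)) = S f := by
  classical
  rw [S, MonoidAlgebra.coeff_ofCoeff, Finsupp.mapDomain_support_of_injective hg, Finset.sum_image
    (fun a _ b _ h => hg h)]
  exact Finset.sum_congr rfl fun x _ => by rw [Finsupp.mapDomain_apply hg]

lemma mul_single_eq (f : MonoidAlgebra ℂ (FreeMonoid (Fin m))) (y : FreeMonoid (Fin m)) :
    f * MonoidAlgebra.single y 1 = MonoidAlgebra.ofCoeff (Finsupp.mapDomain (· * y) f.coeff) := by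
  rw [MonoidAlgebra.mul_def, Finsupp.mapDomain, MonoidAlgebra.ofCoeff_finsuppSum]
  congr 1; ext a b
  rw [MonoidAlgebra.coeff_single, Finsupp.sum_single_index] <;> simp [MonoidAlgebra.ofCoeff_single]

lemma single_mul_eq (f : MonoidAlgebra ℂ (FreeMonoid (Fin m))) (y : FreeMonoid (Fin m)) :
    MonoidAlgebra.single y (1:ℂ) * f = MonoidAlgebra.ofCoeff (Finsupp.mapDomain (y * ·) f.coeff) := by
  rw [MonoidAlgebra.mul_def, MonoidAlgebra.coeff_single, Finsupp.sum_single_index]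
  · rw [Finsupp.mapDomain, MonoidAlgebra.ofCoeff_finsuppSum]
    congr 1; ext a b; rw [one_mul, MonoidAlgebra.ofCoeff_single]
  · simp

lemma S_mul_single (f : MonoidAlgebra ℂ (FreeMonoid (Fin m))) (y : FreeMonoid (Fin m)) :
    S (f * MonoidAlgebra.single y 1) = S f := by
  rw [mul_single_eq, S_mapDomain (mul_left_injective y)]

lemma S_single_mul (f : MonoidAlgebra ℂ (FreeMonoid (Fin m))) (y : FreeMonoid (Fin m)) :
    S (MonoidAlgebra.single y (1:ℂ) * f) = S f := by
  rw [single_mul_eq, S_mapDomain (mul_right_injective y)]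

lemma S_sum_of_disjoint {ι : Type*} [DecidableEq ι] (s : Finset ι)
    (f : ι → MonoidAlgebra ℂ (FreeMonoid (Fin m)))
    (h : ∀ i ∈ s, ∀ j ∈ s, i ≠ j → Disjoint (f i).coeff.support (f j).coeff.support) :
    S (∑ i ∈ s, f i) = ∑ i ∈ s, S (f i) := by
  classical
  have hsupp : (∑ i ∈ s, f i).coeff.support ⊆ s.biUnion fun i => (f i).coeff.support := by
    rw [MonoidAlgebra.coeff_sum]; exact Finsupp.support_finsetSum
  rw [S_subset hsupp, Finset.sum_biUnion (fun i hi j hj hij => h i hi j hj hij)]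
  refine Finset.sum_congr rfl fun i hi => ?_
  rw [S]
  refine Finset.sum_congr rfl fun x hx => ?_
  have : (∑ j ∈ s, f j).coeff x = (f i).coeff x := by
    rw [MonoidAlgebra.coeff_sum, Finsupp.finset_sum_apply]
    refine Finset.sum_eq_single_of_mem i hi fun j hj hji => ?_
    by_contra hne
    exact (Finset.disjoint_left.mp (h j hj i hi hji)) (Finsupp.mem_support_iff.mpr hne) hx
  rw [this]

lemma head_dropWhile {α : Type*} (p : α → Bool) (l : List α) :
    ∀ a, (l.dropWhile p).head? = some a → p a = false := by
  induction l with
  | nil => intro a h; simp at h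
  | cons b l ih =>
    intro a h
    by_cases hb : p b
    · rw [List.dropWhile_cons_of_pos hb] at h; exact ih a h
    · rw [List.dropWhile_cons_of_neg hb] at h
      simp at h; rw [← h]; simpa using hb

variable {n : ℕ}

lemma drop_of (w y : FreeMonoid (Fin m)) (hw : ∀ i ∈ w.toList, (i : ℕ) < n)
    (hy : ∀ i : Fin m, y.toList.head? = some i → n ≤ (i : ℕ)) :
    (w * y).toList.dropWhile (fun i : Fin m => decide ((i : ℕ) < n)) = y.toList := by
  have h1 : (w * y).toList = w.toList ++ y.toList := rfl
  rw [h1, List.dropWhile_append_of_pos (fun a ha => by simpa using hw a ha)]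
  cases hyl : y.toList with
  | nil => simp
  | cons a l =>
    have : n ≤ (a : ℕ) := hy a (by rw [hyl]; rfl)
    rw [List.dropWhile_cons_of_neg (by simpa using not_lt.mpr this)]

/-- Core Pythagoras lemma, Finset-indexed. -/
lemma main1 {ι : Type*} [DecidableEq ι] (s : Finset ι)
    (p : MonoidAlgebra ℂ (FreeMonoid (Fin m)))
    (hp : ∀ x ∈ p.coeff.support, ∀ i ∈ x.toList, (i : ℕ) < n)
    (r : ι → MonoidAlgebra ℂ (FreeMonoid (Fin m)))
    (y : ι → FreeMonoid (Fin m))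
    (hr : ∀ j ∈ s, ∀ x ∈ (r j).coeff.support, ∀ i ∈ x.toList, (i : ℕ) < n)
    (hy : ∀ j ∈ s, ∀ i : Fin m, (y j).toList.head? = some i → n ≤ (i : ℕ))
    (hinj : Set.InjOn y s) :
    S (p * ∑ j ∈ s, r j * MonoidAlgebra.single (y j) 1) = ∑ j ∈ s, S (p * r j) := by
  classical
  have hassoc : p * ∑ j ∈ s, r j * MonoidAlgebra.single (y j) 1
      = ∑ j ∈ s, (p * r j) * MonoidAlgebra.single (y j) 1 := by
    rw [Finset.mul_sum]
    exact Finset.sum_congr rfl fun j _ => (mul_assoc _ _ _).symm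
  -- letters of support of p * r j are < n
  have hprsupp : ∀ j ∈ s, ∀ x ∈ (p * r j).coeff.support, ∀ i ∈ x.toList, (i : ℕ) < n := by
    intro j hj x hx i hi
    have := MonoidAlgebra.support_coeff_mul_subset p (r j) hx
    rw [Finset.mem_mul] at this
    obtain ⟨a, ha, b, hb, rfl⟩ := this
    have hab : (a * b).toList = a.toList ++ b.toList := rfl
    rw [hab, List.mem_append] at hi
    rcases hi with h | h
    · exact hp a ha i h
    · exact hr j hj b hb i h
  -- on the support of (p * r j) * single (y j) 1, dropWhile recovers y j
  have hdrop : ∀ j ∈ s, ∀ z ∈ ((p * r j) * MonoidAlgebra.single (y j) 1).coeff.support,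
      z.toList.dropWhile (fun i : Fin m => decide ((i : ℕ) < n)) = (y j).toList := by
    intro j hj z hz
    rw [mul_single_eq] at hz
    have := Finsupp.mapDomain_support hz
    rw [Finset.mem_image] at this
    obtain ⟨w, hw, rfl⟩ := this
    exact drop_of w (y j) (hprsupp j hj w hw) (hy j hj)
  have hdisj : ∀ i ∈ s, ∀ j ∈ s, i ≠ j →
      Disjoint ((p * r i) * MonoidAlgebra.single (y i) 1).coeff.support
        ((p * r j) * MonoidAlgebra.single (y j) 1).coeff.support := by
    intro i hi j hj hij
    rw [Finset.disjoint_left]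
    intro z hzi hzj
    have h1 := hdrop i hi z hzi
    have h2 := hdrop j hj z hzj
    exact hij (hinj hi hj (FreeMonoid.toList.injective (h1.symm.trans h2)))
  rw [hassoc, S_sum_of_disjoint s _ hdisj]
  exact Finset.sum_congr rfl fun j _ => S_mul_single _ _

/-- the maximal `M_n` prefix, and the remainder. -/
def Wp (n : ℕ) (z : FreeMonoid (Fin m)) : FreeMonoid (Fin m) :=
  FreeMonoid.ofList (z.toList.takeWhile (fun i : Fin m => decide ((i : ℕ) < n)))

def Dp (n : ℕ) (z : FreeMonoid (Fin m)) : FreeMonoid (Fin m) :=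
  FreeMonoid.ofList (z.toList.dropWhile (fun i : Fin m => decide ((i : ℕ) < n)))

lemma Wp_mul_Dp (z : FreeMonoid (Fin m)) : Wp n z * Dp n z = z := by
  rw [Wp, Dp, ← FreeMonoid.ofList_append, List.takeWhile_append_dropWhile,
    FreeMonoid.ofList_toList]

lemma Wp_letters (z : FreeMonoid (Fin m)) : ∀ i ∈ (Wp n z).toList, (i : ℕ) < n := by
  intro i hi
  rw [Wp, FreeMonoid.toList_ofList] at hi
  simpa using List.mem_takeWhile_imp hi

lemma Dp_head (z : FreeMonoid (Fin m)) :
    ∀ i : Fin m, (Dp n z).toList.head? = some i → n ≤ (i : ℕ) := by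
  intro i hi
  rw [Dp, FreeMonoid.toList_ofList] at hi
  have := head_dropWhile _ _ _ hi
  simpa using this

def toMA (f : FreeMonoid (Fin m) →₀ ℂ) : MonoidAlgebra ℂ (FreeMonoid (Fin m)) :=
  MonoidAlgebra.ofCoeff f

/-- decomposition of `q` as `∑_{y ∈ Y} (r y) * δ_y`. -/
lemma decomp (q : MonoidAlgebra ℂ (FreeMonoid (Fin m))) (y : FreeMonoid (Fin m)) :
    toMA (Finsupp.mapDomain (Wp n) (Finsupp.filter (fun z => Dp n z = y) q.coeff))
      * MonoidAlgebra.single y 1 = toMA (Finsupp.filter (fun z => Dp n z = y) q.coeff) := by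
  classical
  simp only [toMA]
  rw [mul_single_eq, MonoidAlgebra.coeff_ofCoeff, ← Finsupp.mapDomain_comp]
  rw [Finsupp.mapDomain_congr (g := id), Finsupp.mapDomain_id]
  intro z hz
  rw [Finsupp.support_filter, Finset.mem_filter] at hz
  have : Wp n z * Dp n z = z := Wp_mul_Dp z
  simp only [Function.comp_apply, id_eq]
  rw [hz.2] at this
  exact this

lemma sum_filter_eq (q : MonoidAlgebra ℂ (FreeMonoid (Fin m))) :
    ∑ y ∈ q.coeff.support.image (Dp n), toMA (Finsupp.filter (fun z => Dp n z = y) q.coeff) = q := by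
  classical
  ext z
  rw [MonoidAlgebra.coeff_sum, Finsupp.finset_sum_apply]
  simp only [toMA, MonoidAlgebra.coeff_ofCoeff, Finsupp.filter_apply]
  rw [Finset.sum_ite_eq (q.coeff.support.image (Dp n)) (Dp n z) (fun _ => q.coeff z)]
  by_cases h : Dp n z ∈ q.coeff.support.image (Dp n)
  · simp [h]
  · rw [if_neg h]
    by_contra hne
    exact h (Finset.mem_image_of_mem _ (Finsupp.mem_support_iff.mpr fun h0 => hne h0.symm))

lemma l2norm_single_mul (y : FreeMonoid (Fin m)) (f : MonoidAlgebra ℂ (FreeMonoid (Fin m))) :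
    l2norm (MonoidAlgebra.single y (1:ℂ) * f) = l2norm f := by
  rw [l2norm_def, S_single_mul, l2norm_def]

lemma conv_le (p q : MonoidAlgebra ℂ (FreeMonoid (Fin m))) :
    l2norm (p * q) ≤ (∑ x ∈ p.coeff.support, ‖p.coeff x‖) * l2norm q := by
  classical
  have hdecomp : p * q = ∑ x ∈ p.coeff.support, (p.coeff x) • (MonoidAlgebra.single x 1 * q) := by
    have hp : p = ∑ x ∈ p.coeff.support, MonoidAlgebra.single x (p.coeff x) := by
      have := MonoidAlgebra.sum_coeff_single p
      rw [Finsupp.sum] at this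
      exact this.symm
    conv_lhs => rw [hp]
    rw [Finset.sum_mul]
    refine Finset.sum_congr rfl fun x _ => ?_
    rw [← smul_mul_assoc, MonoidAlgebra.smul_single', mul_one]
  rw [hdecomp]
  calc l2norm (∑ x ∈ p.coeff.support, (p.coeff x) • (MonoidAlgebra.single x 1 * q))
      ≤ ∑ x ∈ p.coeff.support, l2norm ((p.coeff x) • (MonoidAlgebra.single x 1 * q)) :=
        l2norm_sum_le _ _
    _ = ∑ x ∈ p.coeff.support, ‖p.coeff x‖ * l2norm q := by
        refine Finset.sum_congr rfl fun x _ => ?_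
        rw [l2norm_smul, l2norm_single_mul]
    _ = (∑ x ∈ p.coeff.support, ‖p.coeff x‖) * l2norm q := by rw [Finset.sum_mul]

end ConvAux

open ConvAux

/-- Let `M_n ≤ M_m` be the submonoid on the first `n` generators and `E` the set of words
that are empty or start with a generator not among the first `n`. If `p` is supported on
`M_n` and `q = Σⱼ rⱼ * δ_{yⱼ}` with each `rⱼ` supported on `M_n` and the `yⱼ ∈ E`
distinct, then `‖p * q‖₂² = Σⱼ ‖p * rⱼ‖₂²`; consequently the left-convolution operator
norm of `p` on `ℓ²(M_m)` equals its left-convolution operator norm on `ℓ²(M_n)`. -/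
theorem convolution_norm_restriction {m n : ℕ} (hnm : n ≤ m)
    (p : MonoidAlgebra ℂ (FreeMonoid (Fin m)))
    (hp : ∀ x ∈ p.coeff.support, ∀ i ∈ x.toList, (i : ℕ) < n) :
    (∀ (N : ℕ) (r : Fin N → MonoidAlgebra ℂ (FreeMonoid (Fin m)))
      (y : Fin N → FreeMonoid (Fin m)),
      (∀ j, ∀ x ∈ (r j).coeff.support, ∀ i ∈ x.toList, (i : ℕ) < n) →
      (∀ j, ∀ i : Fin m, (y j).toList.head? = some i → n ≤ (i : ℕ)) →
      Function.Injective y →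
      (l2norm (p * ∑ j, r j * MonoidAlgebra.single (y j) 1)) ^ 2
        = ∑ j, (l2norm (p * r j)) ^ 2) ∧
    sSup {t : ℝ | ∃ q : MonoidAlgebra ℂ (FreeMonoid (Fin m)),
        l2norm q ≤ 1 ∧ t = l2norm (p * q)}
      = sSup {t : ℝ | ∃ q : MonoidAlgebra ℂ (FreeMonoid (Fin m)),
          (∀ x ∈ q.coeff.support, ∀ i ∈ x.toList, (i : ℕ) < n) ∧
          l2norm q ≤ 1 ∧ t = l2norm (p * q)} := by
  classical
  constructor
  · intro N r y hr hy hinj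
    simp only [l2norm_sq]
    exact main1 Finset.univ p hp r y (fun j _ => hr j) (fun j _ => hy j) hinj.injOn
  · set A := {t : ℝ | ∃ q : MonoidAlgebra ℂ (FreeMonoid (Fin m)),
        l2norm q ≤ 1 ∧ t = l2norm (p * q)} with hA
    set B := {t : ℝ | ∃ q : MonoidAlgebra ℂ (FreeMonoid (Fin m)),
          (∀ x ∈ q.coeff.support, ∀ i ∈ x.toList, (i : ℕ) < n) ∧
          l2norm q ≤ 1 ∧ t = l2norm (p * q)} with hB
    have hCnn : 0 ≤ ∑ x ∈ p.coeff.support, ‖p.coeff x‖ := Finset.sum_nonneg fun _ _ => norm_nonneg _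
    have hbddA : BddAbove A := by
      refine ⟨∑ x ∈ p.coeff.support, ‖p.coeff x‖, ?_⟩
      rintro t ⟨q, hq1, rfl⟩
      calc l2norm (p * q) ≤ (∑ x ∈ p.coeff.support, ‖p.coeff x‖) * l2norm q := conv_le p q
        _ ≤ (∑ x ∈ p.coeff.support, ‖p.coeff x‖) * 1 :=
            mul_le_mul_of_nonneg_left hq1 hCnn
        _ = _ := mul_one _
    have hBsubA : B ⊆ A := by rintro t ⟨q, _, h2, h3⟩; exact ⟨q, h2, h3⟩
    have hbddB : BddAbove B := hbddA.mono hBsubA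
    have h0B : (0 : ℝ) ∈ B :=
      ⟨0, by simp, by rw [l2norm_zero]; exact zero_le_one, by rw [mul_zero, l2norm_zero]⟩
    have h0A : (0 : ℝ) ∈ A := hBsubA h0B
    have hM0 : 0 ≤ sSup B := le_csSup hbddB h0B
    refine le_antisymm (csSup_le ⟨0, h0A⟩ ?_) (csSup_le_csSup hbddA ⟨0, h0B⟩ hBsubA)
    rintro t ⟨q, hq1, rfl⟩
    set Y := q.coeff.support.image (Dp n) with hY
    set r : FreeMonoid (Fin m) → MonoidAlgebra ℂ (FreeMonoid (Fin m)) :=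
      fun y => toMA (Finsupp.mapDomain (Wp n) (Finsupp.filter (fun z => Dp n z = y) q.coeff))
      with hrdef
    have hq : q = ∑ y ∈ Y, r y * MonoidAlgebra.single y 1 := by
      conv_lhs => rw [← sum_filter_eq (n := n) q]
      exact Finset.sum_congr rfl fun y _ => (decomp q y).symm
    have hr : ∀ y ∈ Y, ∀ x ∈ (r y).coeff.support, ∀ i ∈ x.toList, (i : ℕ) < n := by
      intro y _ x hx i hi
      have hx' : x ∈ (Finsupp.mapDomain (Wp n)
          (Finsupp.filter (fun z => Dp n z = y) q.coeff)).support := hx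
      have := Finsupp.mapDomain_support hx'
      rw [Finset.mem_image] at this
      obtain ⟨z, _, rfl⟩ := this
      exact Wp_letters z i hi
    have hyE : ∀ y ∈ Y, ∀ i : Fin m, y.toList.head? = some i → n ≤ (i : ℕ) := by
      intro y hy
      rw [hY, Finset.mem_image] at hy
      obtain ⟨z, _, rfl⟩ := hy
      exact Dp_head z
    have hSr : ∀ y, S (r y) = S (toMA (Finsupp.filter (fun z => Dp n z = y) q.coeff)) := by
      intro y
      rw [← S_mul_single (r y) y]
      exact congrArg S (decomp q y)
    have hfiltdisj : ∀ i ∈ Y, ∀ j ∈ Y, i ≠ j →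
        Disjoint (toMA (Finsupp.filter (fun z => Dp n z = i) q.coeff)).coeff.support
          (toMA (Finsupp.filter (fun z => Dp n z = j) q.coeff)).coeff.support := by
      intro i _ j _ hij
      rw [Finset.disjoint_left]
      intro z hzi hzj
      have hzi' : z ∈ (Finsupp.filter (fun z => Dp n z = i) q.coeff).support := hzi
      have hzj' : z ∈ (Finsupp.filter (fun z => Dp n z = j) q.coeff).support := hzj
      rw [Finsupp.support_filter, Finset.mem_filter] at hzi' hzj'
      exact hij (hzi'.2 ▸ hzj'.2)
    have hSq : ∑ y ∈ Y, S (r y) = S q := by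
      calc ∑ y ∈ Y, S (r y)
          = ∑ y ∈ Y, S (toMA (Finsupp.filter (fun z => Dp n z = y) q.coeff)) :=
            Finset.sum_congr rfl fun y _ => hSr y
        _ = S (∑ y ∈ Y, toMA (Finsupp.filter (fun z => Dp n z = y) q.coeff)) :=
            (S_sum_of_disjoint Y _ hfiltdisj).symm
        _ = S q := by
            congr 1
            exact sum_filter_eq (n := n) q
    have hmain : S (p * q) = ∑ y ∈ Y, S (p * r y) := by
      conv_lhs => rw [hq]
      exact main1 Y p hp r id hr hyE (Set.injOn_id _)
    have hry : ∀ y ∈ Y, S (p * r y) ≤ (sSup B) ^ 2 * S (r y) := by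
      intro y hyY
      by_cases h0 : r y = 0
      · rw [h0, mul_zero]
        simp [S]
      · set c := l2norm (r y) with hc
        have hcpos : 0 < c := l2norm_pos h0
        have hmem : l2norm (p * (((c⁻¹ : ℝ) : ℂ) • r y)) ∈ B := by
          refine ⟨((c⁻¹ : ℝ) : ℂ) • r y, ?_, ?_, rfl⟩
          · intro x hx i hi
            exact hr y hyY x (by rw [MonoidAlgebra.coeff_smul] at hx; exact Finsupp.support_smul hx) i hi
          · rw [l2norm_smul, Complex.norm_real, Real.norm_eq_abs,
              abs_of_pos (inv_pos.mpr hcpos), ← hc, inv_mul_cancel₀ hcpos.ne']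
        have hle : l2norm (p * (((c⁻¹ : ℝ) : ℂ) • r y)) ≤ sSup B := le_csSup hbddB hmem
        rw [mul_smul_comm, l2norm_smul, Complex.norm_real, Real.norm_eq_abs,
          abs_of_pos (inv_pos.mpr hcpos)] at hle
        have hL : l2norm (p * r y) ≤ c * sSup B := by
          have : l2norm (p * r y) = c * (c⁻¹ * l2norm (p * r y)) := by
            field_simp
          rw [this]
          exact mul_le_mul_of_nonneg_left hle hcpos.le
        calc S (p * r y) = (l2norm (p * r y)) ^ 2 := (l2norm_sq _).symm
          _ ≤ (c * sSup B) ^ 2 := by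
              apply pow_le_pow_left₀ (l2norm_nonneg _) hL
          _ = (sSup B) ^ 2 * c ^ 2 := by ring
          _ = (sSup B) ^ 2 * S (r y) := by rw [hc, l2norm_sq]
    have hfinal : (l2norm (p * q)) ^ 2 ≤ (sSup B) ^ 2 := by
      calc (l2norm (p * q)) ^ 2 = S (p * q) := l2norm_sq _
        _ = ∑ y ∈ Y, S (p * r y) := hmain
        _ ≤ ∑ y ∈ Y, (sSup B) ^ 2 * S (r y) := Finset.sum_le_sum hry
        _ = (sSup B) ^ 2 * ∑ y ∈ Y, S (r y) := by rw [Finset.mul_sum]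
        _ = (sSup B) ^ 2 * S q := by rw [hSq]
        _ = (sSup B) ^ 2 * (l2norm q) ^ 2 := by rw [l2norm_sq]
        _ ≤ (sSup B) ^ 2 * 1 := by
            apply mul_le_mul_of_nonneg_left _ (sq_nonneg _)
            exact pow_le_one₀ (l2norm_nonneg _) hq1
        _ = (sSup B) ^ 2 := mul_one _
    calc l2norm (p * q) = Real.sqrt ((l2norm (p * q)) ^ 2) :=
          (Real.sqrt_sq (l2norm_nonneg _)).symm
      _ ≤ Real.sqrt ((sSup B) ^ 2) := Real.sqrt_le_sqrt hfinal
      _ = sSup B := Real.sqrt_sq hM0
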